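/- Let λ ∈ ℂ*, α, β ∈ ℂ, and define operators on ℂ[t] by L_{i,1}·t^k = λ^i(α − iαβ + βt)(t−i)^k + kλ^i(t−iα)(t−i)^{k−1} and L_{i,2}·t^k = λ^iβ(2α − iαβ + βt)(t−i)^k + 2kλ^i(α − iαβ + βt)(t−i)^{k−1} + k(k−1)λ^i(t−iα)(t−i)^{k−2}. Then L_{i,1}·L_{j,1}·t^k − L_{j,1}·L_{i,1}·t^k = (j−i)L_{i+j,2}·t^k for all i, j ∈ ℤ, k ∈ ℕ. -/
import Mathlib
set_option maxHeartbeats 2000000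


open Polynomial

/-- if linear operators `L1 i = L_{i,1}` and `L2 i = L_{i,2}` on `ℂ[t]`
act on monomials by
`L_{i,1}·t^k = λ^i(α - iαβ + βt)(t-i)^k + kλ^i(t-iα)(t-i)^{k-1}` and
`L_{i,2}·t^k = λ^iβ(2α - iαβ + βt)(t-i)^k + 2kλ^i(α - iαβ + βt)(t-i)^{k-1}
  + k(k-1)λ^i(t-iα)(t-i)^{k-2}`,
then `L_{i,1}·L_{j,1}·t^k - L_{j,1}·L_{i,1}·t^k = (j-i)L_{i+j,2}·t^k`. -/
theorem stmt_11 (lam α β : ℂ) (hlam : lam ≠ 0)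
    (L1 L2 : ℤ → ℂ[X] →ₗ[ℂ] ℂ[X])
    (hL1 : ∀ (i : ℤ) (k : ℕ),
      L1 i (X ^ k) = C (lam ^ i) * (C (α - (i : ℂ) * α * β) + C β * X) * (X - C (i : ℂ)) ^ k
        + (k : ℂ) • (C (lam ^ i) * (X - C ((i : ℂ) * α)) * (X - C (i : ℂ)) ^ (k - 1)))
    (hL2 : ∀ (i : ℤ) (k : ℕ),
      L2 i (X ^ k) = C (lam ^ i) * C β * (C (2 * α - (i : ℂ) * α * β) + C β * X) *
          (X - C (i : ℂ)) ^ k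
        + (2 * (k : ℂ)) • (C (lam ^ i) * (C (α - (i : ℂ) * α * β) + C β * X) *
          (X - C (i : ℂ)) ^ (k - 1))
        + ((k : ℂ) * ((k : ℂ) - 1)) • (C (lam ^ i) * (X - C ((i : ℂ) * α)) *
          (X - C (i : ℂ)) ^ (k - 2))) :
    ∀ (i j : ℤ) (k : ℕ),
      L1 i (L1 j (X ^ k)) - L1 j (L1 i (X ^ k)) =
        ((j - i : ℤ) : ℂ) • L2 (i + j) (X ^ k) := by
  have gen : ∀ (i : ℤ) (p : ℂ[X]), L1 i p =
      C (lam ^ i) * ((C (α - (i : ℂ) * α * β) + C β * X) * p.comp (X - C (i : ℂ))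
        + (X - C ((i : ℂ) * α)) * (derivative p).comp (X - C (i : ℂ))) := by
    intro i p
    induction p using Polynomial.induction_on' with
    | add p q hp hq => rw [map_add, hp, hq]; simp only [derivative_add, add_comp]; ring
    | monomial n a =>
        rw [← C_mul_X_pow_eq_monomial, ← smul_eq_C_mul, map_smul, hL1]
        simp only [derivative_smul, derivative_C_mul, derivative_X_pow, smul_comp, X_pow_comp,
          mul_comp, C_comp, smul_eq_C_mul]
        ring
  intro i j k
  rcases k with _ | _ | n <;>
  · simp only [gen, hL2, zpow_add₀ hlam, derivative_mul, derivative_add, derivative_sub,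
      derivative_pow, derivative_C, derivative_X, derivative_one, derivative_X_pow,
      add_comp, sub_comp, mul_comp, pow_comp, C_comp, X_comp, one_comp, zero_comp,
      mul_zero, zero_mul, add_zero, zero_add, sub_zero, mul_one, one_mul,
      Nat.add_sub_cancel, smul_eq_C_mul]
    push_cast
    simp only [map_add, map_sub, map_mul, map_one, map_ofNat, map_zero, Nat.cast_ofNat,
      Nat.cast_zero, Nat.cast_one, pow_zero]
    ring
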